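/- Let Q_P : Δ(S) × A → ℝ be bounded, convex in the belief, and satisfy Q_P = H_POMDP Q_P, and let Q_O : Δ(S) × A → ℝ be bounded with Q_O = H_OTIB Q_O. Then for every belief b ∈ Δ(S) and every a ∈ A: Q_P(b,a) ≤ Q_O(b,a) (soundness of the optimized tighter informed bound). -/

import Mathlib

open Finset
open scoped Classical

set_option linter.unusedSectionVars false

/-- A belief (probability distribution) over a finite state space `S`. -/
structure Belief (S : Type*) [Fintype S] where
  val : S → ℝ
  nonneg : ∀ s, 0 ≤ val s
  sum_one : ∑ s, val s = 1

/-- The convex combination `l • b₁ + (1-l) • b₂` of two beliefs. -/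
noncomputable def Belief.mix {S : Type*} [Fintype S] (b₁ b₂ : Belief S) (l : ℝ)
    (h0 : 0 ≤ l) (h1 : l ≤ 1) : Belief S where
  val s := l * b₁.val s + (1 - l) * b₂.val s
  nonneg s := add_nonneg (mul_nonneg h0 (b₁.nonneg s))
    (mul_nonneg (by linarith) (b₂.nonneg s))
  sum_one := by
    rw [Finset.sum_add_distrib, ← Finset.mul_sum, ← Finset.mul_sum, b₁.sum_one, b₂.sum_one]
    ring

/-- `Q : Δ(S) × A → ℝ` is convex in the belief. -/
def ConvexInBelief {S A : Type*} [Fintype S] (Q : Belief S → A → ℝ) : Prop :=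
  ∀ (a : A) (b₁ b₂ : Belief S) (l : ℝ) (h0 : 0 ≤ l) (h1 : l ≤ 1),
    Q (Belief.mix b₁ b₂ l h0 h1) a ≤ l * Q b₁ a + (1 - l) * Q b₂ a

/-- A finite POMDP: transition function `T s a s' = T(s'|s,a)`, observation function
`Z a s' o = Ω(o|a,s')`, rewards `R`, discount `γ ∈ (0,1)`. -/
structure POMDP (S A O : Type*) [Fintype S] [Fintype A] [Fintype O] where
  T : S → A → S → ℝ
  T_nonneg : ∀ s a s', 0 ≤ T s a s'
  T_sum_one : ∀ s a, ∑ s', T s a s' = 1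
  Z : A → S → O → ℝ
  Z_nonneg : ∀ a s' o, 0 ≤ Z a s' o
  Z_sum_one : ∀ a s', ∑ o, Z a s' o = 1
  R : S → A → ℝ
  γ : ℝ
  γ_pos : 0 < γ
  γ_lt_one : γ < 1

namespace POMDP

variable {S A O : Type*} [Fintype S] [Fintype A] [Fintype O] [Nonempty S] [Nonempty A]
  [Nonempty O]
variable (M : POMDP S A O)

/-- `Pr(s',o|s,a)` -/
def prSO (s : S) (a : A) (s' : S) (o : O) : ℝ := M.Z a s' o * M.T s a s'

lemma prSO_nonneg (s : S) (a : A) (s' : S) (o : O) : 0 ≤ M.prSO s a s' o :=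
  mul_nonneg (M.Z_nonneg a s' o) (M.T_nonneg s a s')

/-- `Pr(o|s,a)` -/
def prO (s : S) (a : A) (o : O) : ℝ := ∑ s', M.prSO s a s' o

/-- `Pr(s',o|b,a)` -/
def bprSO (b : Belief S) (a : A) (s' : S) (o : O) : ℝ := ∑ s, b.val s * M.prSO s a s' o

lemma bprSO_nonneg (b : Belief S) (a : A) (s' : S) (o : O) : 0 ≤ M.bprSO b a s' o :=
  Finset.sum_nonneg fun s _ => mul_nonneg (b.nonneg s) (M.prSO_nonneg s a s' o)

/-- `Pr(o|b,a)` -/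
def bprO (b : Belief S) (a : A) (o : O) : ℝ := ∑ s', M.bprSO b a s' o

/-- The unit belief `δ_s`. -/
noncomputable def unit (s : S) : Belief S where
  val s' := if s' = s then 1 else 0
  nonneg s' := by by_cases h : s' = s <;> simp [h]
  sum_one := by simp

/-- The posterior belief `b_{b,a,o}`, defined when `Pr(o|b,a) > 0`. -/
noncomputable def post (b : Belief S) (a : A) (o : O) (h : 0 < M.bprO b a o) : Belief S where
  val s' := M.bprSO b a s' o / M.bprO b a o
  nonneg s' := div_nonneg (M.bprSO_nonneg b a s' o) h.le
  sum_one := by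
    rw [← Finset.sum_div]
    exact div_self (ne_of_gt h)

/-- The one-step belief `b_{s,a,o} = b_{δ_s,a,o}`, defined when `Pr(o|s,a) > 0`. -/
noncomputable def osb (s : S) (a : A) (o : O) (h : 0 < M.prO s a o) : Belief S where
  val s' := M.prSO s a s' o / M.prO s a o
  nonneg s' := div_nonneg (M.prSO_nonneg s a s' o) h.le
  sum_one := by
    unfold prO
    rw [← Finset.sum_div]
    exact div_self (ne_of_gt h)

/-- Expected reward `R(b,a)`. -/
noncomputable def expR (b : Belief S) (a : A) : ℝ := ∑ s, b.val s * M.R s a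

/-- The fast informed bound operator `H_FIB`. -/
noncomputable def HFIB (Q : Belief S → A → ℝ) (b : Belief S) (a : A) : ℝ :=
  M.expR b a + M.γ * ∑ o, Finset.univ.sup' Finset.univ_nonempty
    (fun a' => ∑ s', M.bprSO b a s' o * Q (unit s') a')

/-- The tighter informed bound operator `H_TIB`. -/
noncomputable def HTIB (Q : Belief S → A → ℝ) (b : Belief S) (a : A) : ℝ :=
  M.expR b a + M.γ * ∑ o, Finset.univ.sup' Finset.univ_nonempty
    (fun a' => ∑ s, if h : 0 < M.prO s a o then
      b.val s * M.prO s a o * Q (M.osb s a o h) a' else 0)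

/-- The optimal Bellman operator `H_POMDP`. -/
noncomputable def HPOMDP (Q : Belief S → A → ℝ) (b : Belief S) (a : A) : ℝ :=
  M.expR b a + M.γ * ∑ o, if h : 0 < M.bprO b a o then
    M.bprO b a o * Finset.univ.sup' Finset.univ_nonempty (fun a' => Q (M.post b a o h) a')
  else 0

/-- Index type for the family `B_SAO`: `none` indexes the initial belief `b₀`,
`some (s,a,o)` (with `Pr(o|s,a) > 0`) indexes the one-step belief `b_{s,a,o}`. -/
abbrev OSIdx : Type _ := Option {x : S × A × O // 0 < M.prO x.1 x.2.1 x.2.2}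

/-- The member of the family `B_SAO` (with initial belief `b₀`) at a given index. -/
noncomputable def member (b₀ : Belief S) : M.OSIdx → Belief S
  | none => b₀
  | some x => M.osb x.1.1 x.1.2.1 x.1.2.2 x.2

/-- `w` is a weight function for the belief `tgt` over the family `B_SAO`. -/
def IsWeight (b₀ : Belief S) (tgt : Belief S) (w : M.OSIdx → ℝ) : Prop :=
  (∀ i, 0 ≤ w i) ∧ ∀ s, ∑ i, w i * (M.member b₀ i).val s = tgt.val s

/-- The optimized tighter informed bound operator `H_OTIB`. -/
noncomputable def HOTIB (b₀ : Belief S) (Q : Belief S → A → ℝ) (b : Belief S) (a : A) : ℝ :=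
  M.expR b a + M.γ * ∑ o, if h : 0 < M.bprO b a o then
    Finset.univ.sup' Finset.univ_nonempty (fun a' =>
      M.bprO b a o * ⨅ w : {w : M.OSIdx → ℝ // M.IsWeight b₀ (M.post b a o h) w},
        ∑ i, (w : M.OSIdx → ℝ) i * Q (M.member b₀ i) a')
  else 0

/-- The operator `H_ŵ` induced by a weight selection `W`. -/
noncomputable def Hsel (b₀ : Belief S)
    (W : ∀ (b : Belief S) (a : A) (o : O), 0 < M.bprO b a o → (M.OSIdx → ℝ))
    (Q : Belief S → A → ℝ) (b : Belief S) (a : A) : ℝ :=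
  M.expR b a + M.γ * ∑ o, if h : 0 < M.bprO b a o then
    Finset.univ.sup' Finset.univ_nonempty (fun a' =>
      M.bprO b a o * ∑ i, W b a o h i * Q (M.member b₀ i) a')
  else 0

end POMDP

/-! ### Auxiliary lemmas -/

lemma Belief.ext' {S : Type*} [Fintype S] {b₁ b₂ : Belief S}
    (h : ∀ s, b₁.val s = b₂.val s) : b₁ = b₂ := by
  cases b₁; cases b₂
  simp only [Belief.mk.injEq]
  exact funext h

/-- Jensen's inequality for convex-in-belief functions, over a finset. -/
lemma jensen_aux {S A : Type*} [Fintype S] {Q : Belief S → A → ℝ} (hconv : ConvexInBelief Q)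
    {ι : Type*} (f : ι → Belief S) (a : A) (t : Finset ι) :
    ∀ (w : ι → ℝ), (∀ i ∈ t, 0 ≤ w i) → ∀ (c : ℝ), 0 < c →
      ∀ tgt : Belief S, (∀ s, ∑ i ∈ t, w i * (f i).val s = c * tgt.val s) →
      c * Q tgt a ≤ ∑ i ∈ t, w i * Q (f i) a := by
  induction t using Finset.induction_on with
  | empty =>
    intro w hw c hc tgt htgt
    exfalso
    have h1 : (0 : ℝ) = c := by
      calc (0 : ℝ) = ∑ s, ∑ i ∈ (∅ : Finset ι), w i * (f i).val s := by simp
        _ = ∑ s, c * tgt.val s := by simp [htgt]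
        _ = c := by rw [← Finset.mul_sum, tgt.sum_one, mul_one]
    linarith
  | @insert i t hit ih =>
    intro w hw c hc tgt htgt
    have hwi : 0 ≤ w i := hw i (Finset.mem_insert_self i t)
    have hwt : ∀ j ∈ t, 0 ≤ w j := fun j hj => hw j (Finset.mem_insert_of_mem hj)
    set c' := ∑ j ∈ t, w j with hc'def
    have hc'0 : 0 ≤ c' := Finset.sum_nonneg hwt
    have hcsum : w i + c' = c := by
      have h1 : ∑ j ∈ insert i t, w j = c := by
        calc ∑ j ∈ insert i t, w j = ∑ j ∈ insert i t, ∑ s, w j * (f j).val s := by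
              refine Finset.sum_congr rfl fun j _ => ?_
              rw [← Finset.mul_sum, (f j).sum_one, mul_one]
          _ = ∑ s, ∑ j ∈ insert i t, w j * (f j).val s := Finset.sum_comm
          _ = ∑ s, c * tgt.val s := by
              exact Finset.sum_congr rfl fun s _ => htgt s
          _ = c := by rw [← Finset.mul_sum, tgt.sum_one, mul_one]
      rw [Finset.sum_insert hit] at h1
      exact h1
    rcases eq_or_lt_of_le hc'0 with hc'z | hc'pos
    · -- all weights in `t` vanish
      have hz : ∀ j ∈ t, w j = 0 :=
        (Finset.sum_eq_zero_iff_of_nonneg hwt).1 hc'z.symm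
      have hwic : w i = c := by rw [← hcsum, ← hc'z]; ring
      have htgteq : tgt = f i := by
        refine Belief.ext' fun s => ?_
        have h2 := htgt s
        rw [Finset.sum_insert hit, Finset.sum_eq_zero (fun j hj => by rw [hz j hj, zero_mul]),
          add_zero, hwic] at h2
        exact (mul_left_cancel₀ hc.ne' h2).symm
      rw [htgteq, Finset.sum_insert hit,
        Finset.sum_eq_zero (fun j hj => by rw [hz j hj, zero_mul]), add_zero, hwic]
    · -- split off the belief `b'` mixing the rest
      set b' : Belief S :=
        ⟨fun s => (∑ j ∈ t, w j * (f j).val s) / c',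
         fun s => div_nonneg (Finset.sum_nonneg fun j hj =>
           mul_nonneg (hwt j hj) ((f j).nonneg s)) hc'0,
         by
          rw [← Finset.sum_div]
          have : ∑ s, ∑ j ∈ t, w j * (f j).val s = c' := by
            rw [Finset.sum_comm]
            calc ∑ j ∈ t, ∑ s, w j * (f j).val s = ∑ j ∈ t, w j := by
                  refine Finset.sum_congr rfl fun j _ => ?_
                  rw [← Finset.mul_sum, (f j).sum_one, mul_one]
              _ = c' := rfl
          rw [this, div_self (ne_of_gt hc'pos)]⟩ with hb'def
      have hb'val : ∀ s, b'.val s = (∑ j ∈ t, w j * (f j).val s) / c' := fun s => rfl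
      have hIH : c' * Q b' a ≤ ∑ j ∈ t, w j * Q (f j) a := by
        refine ih w hwt c' hc'pos b' fun s => ?_
        rw [hb'val s, mul_div_cancel₀ _ (ne_of_gt hc'pos)]
      have hl0 : 0 ≤ w i / c := div_nonneg hwi hc.le
      have hl1 : w i / c ≤ 1 := by
        rw [div_le_one hc]; linarith
      have hmix : tgt = Belief.mix (f i) b' (w i / c) hl0 hl1 := by
        refine Belief.ext' fun s => ?_
        show tgt.val s = (w i / c) * (f i).val s + (1 - w i / c) * b'.val s
        have h2 := htgt s
        rw [Finset.sum_insert hit] at h2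
        have hcne : c ≠ 0 := hc.ne'
        have hc'ne : c' ≠ 0 := hc'pos.ne'
        have h3 : 1 - w i / c = c' / c := by
          field_simp; linarith
        calc tgt.val s = (w i * (f i).val s + ∑ j ∈ t, w j * (f j).val s) / c := by
              rw [eq_div_iff hcne, mul_comm]; linarith [h2]
          _ = (w i / c) * (f i).val s + (1 - w i / c) * b'.val s := by
              rw [h3, hb'val s]
              field_simp
              try ring
      calc c * Q tgt a
          ≤ c * ((w i / c) * Q (f i) a + (1 - w i / c) * Q b' a) := by
            rw [hmix]
            exact mul_le_mul_of_nonneg_left (hconv a (f i) b' (w i / c) hl0 hl1) hc.le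
        _ = w i * Q (f i) a + c' * Q b' a := by
            have h3 : 1 - w i / c = c' / c := by field_simp; linarith
            rw [h3]; field_simp
            try ring
        _ ≤ w i * Q (f i) a + ∑ j ∈ t, w j * Q (f j) a := by linarith
        _ = ∑ j ∈ insert i t, w j * Q (f j) a := by rw [Finset.sum_insert hit]

/-- Jensen's inequality for convex-in-belief functions, over a fintype. -/
lemma jensen {S A : Type*} [Fintype S] {Q : Belief S → A → ℝ} (hconv : ConvexInBelief Q)
    {ι : Type*} [Fintype ι] (f : ι → Belief S) (w : ι → ℝ) (hw : ∀ i, 0 ≤ w i)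
    (tgt : Belief S) (htgt : ∀ s, ∑ i, w i * (f i).val s = tgt.val s) (a : A) :
    Q tgt a ≤ ∑ i, w i * Q (f i) a := by
  have := jensen_aux hconv f a Finset.univ w (fun i _ => hw i) 1 one_pos tgt
    (fun s => by rw [one_mul]; exact htgt s)
  simpa using this

namespace POMDP

variable {S A O : Type*} [Fintype S] [Fintype A] [Fintype O] [Nonempty S] [Nonempty A]
  [Nonempty O] (M : POMDP S A O)

lemma prO_nonneg (s : S) (a : A) (o : O) : 0 ≤ M.prO s a o :=
  Finset.sum_nonneg fun s' _ => M.prSO_nonneg s a s' o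

lemma bprO_nonneg (b : Belief S) (a : A) (o : O) : 0 ≤ M.bprO b a o :=
  Finset.sum_nonneg fun s' _ => M.bprSO_nonneg b a s' o

lemma prSO_eq_zero (s : S) (a : A) (s' : S) (o : O) (h : ¬ 0 < M.prO s a o) :
    M.prSO s a s' o = 0 := by
  have h0 : M.prO s a o = 0 := le_antisymm (not_lt.1 h) (M.prO_nonneg s a o)
  have := (Finset.sum_eq_zero_iff_of_nonneg
    (fun s' _ => M.prSO_nonneg s a s' o)).1 h0
  exact this s' (Finset.mem_univ s')

lemma sum_bprO (b : Belief S) (a : A) : ∑ o, M.bprO b a o = 1 := by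
  have h1 : ∀ s s', ∑ o, b.val s * (M.Z a s' o * M.T s a s') = b.val s * M.T s a s' := by
    intro s s'
    calc ∑ o, b.val s * (M.Z a s' o * M.T s a s')
        = ∑ o, b.val s * M.T s a s' * M.Z a s' o :=
          Finset.sum_congr rfl fun o _ => by ring
      _ = b.val s * M.T s a s' * ∑ o, M.Z a s' o := by rw [Finset.mul_sum]
      _ = b.val s * M.T s a s' := by rw [M.Z_sum_one, mul_one]
  unfold bprO bprSO prSO
  rw [Finset.sum_comm]
  calc ∑ s', ∑ o, ∑ s, b.val s * (M.Z a s' o * M.T s a s')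
      = ∑ s', ∑ s, ∑ o, b.val s * (M.Z a s' o * M.T s a s') :=
        Finset.sum_congr rfl fun s' _ => Finset.sum_comm
    _ = ∑ s', ∑ s, b.val s * M.T s a s' :=
        Finset.sum_congr rfl fun s' _ => Finset.sum_congr rfl fun s _ => h1 s s'
    _ = ∑ s, ∑ s', b.val s * M.T s a s' := Finset.sum_comm
    _ = ∑ s, b.val s :=
        Finset.sum_congr rfl fun s _ => by rw [← Finset.mul_sum, M.T_sum_one, mul_one]
    _ = 1 := b.sum_one

/-- Existence of a weight function for the posterior over `B_SAO`. -/
lemma weight_exists (b₀ b : Belief S) (a : A) (o : O) (h : 0 < M.bprO b a o) :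
    ∃ w : M.OSIdx → ℝ, M.IsWeight b₀ (M.post b a o h) w := by
  classical
  set P : S × A × O → Prop := fun x => 0 < M.prO x.1 x.2.1 x.2.2 with hP
  refine ⟨fun i => match i with
    | none => 0
    | some x => if x.1.2.1 = a ∧ x.1.2.2 = o then
        b.val x.1.1 * M.prO x.1.1 a o / M.bprO b a o else 0, ?_, ?_⟩
  · rintro (_ | x)
    · exact le_refl 0
    · dsimp only
      split
      · exact div_nonneg (mul_nonneg (b.nonneg _) (M.prO_nonneg _ _ _)) h.le
      · exact le_refl 0
  · intro s'
    rw [Fintype.sum_option]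
    simp only [zero_mul, zero_add]
    set G : S × A × O → ℝ := fun x => if x.2.1 = a ∧ x.2.2 = o then
      b.val x.1 * M.prSO x.1 a s' o / M.bprO b a o else 0 with hG
    have step1 : ∑ x : {x : S × A × O // P x},
        (if x.1.2.1 = a ∧ x.1.2.2 = o then
          b.val x.1.1 * M.prO x.1.1 a o / M.bprO b a o else 0) *
          (M.member b₀ (some x)).val s' = ∑ x : {x : S × A × O // P x}, G x.1 := by
      refine Finset.sum_congr rfl fun x _ => ?_
      obtain ⟨⟨s, a₁, o₁⟩, hx⟩ := x
      by_cases hc : a₁ = a ∧ o₁ = o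
      · obtain ⟨rfl, rfl⟩ := hc
        simp only [hG, if_pos (⟨rfl, rfl⟩ : a₁ = a₁ ∧ o₁ = o₁)]
        show b.val s * M.prO s a₁ o₁ / M.bprO b a₁ o₁ * (M.osb s a₁ o₁ hx).val s' = _
        show b.val s * M.prO s a₁ o₁ / M.bprO b a₁ o₁ *
          (M.prSO s a₁ s' o₁ / M.prO s a₁ o₁) = b.val s * M.prSO s a₁ s' o₁ / M.bprO b a₁ o₁
        have hpr : M.prO s a₁ o₁ ≠ 0 := ne_of_gt hx
        field_simp
      · simp only [hG, if_neg hc, zero_mul]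
    rw [step1]
    have step2 : ∑ x : {x : S × A × O // P x}, G x.1 = ∑ x : S × A × O, G x := by
      rw [← Finset.sum_subtype (Finset.univ.filter P)
        (fun x => by simp [hP]) G]
      refine Finset.sum_filter_of_ne fun x _ hGx => ?_
      by_contra hPx
      apply hGx
      simp only [hG]
      by_cases hc : x.2.1 = a ∧ x.2.2 = o
      · rw [if_pos hc]
        have : M.prSO x.1 a s' o = 0 := by
          apply M.prSO_eq_zero
          intro hpos
          apply hPx
          rw [hc.1, hc.2]
          exact hpos
        rw [this]
        simp
      · rw [if_neg hc]
    rw [step2]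
    have step3 : ∑ x : S × A × O, G x = ∑ s, b.val s * M.prSO s a s' o / M.bprO b a o := by
      rw [Fintype.sum_prod_type]
      refine Finset.sum_congr rfl fun s _ => ?_
      rw [Fintype.sum_prod_type]
      simp only [hG]
      rw [Finset.sum_eq_single a]
      · rw [Finset.sum_eq_single o]
        · simp
        · intro o₁ _ ho₁; simp [ho₁]
        · intro hcon; exact absurd (Finset.mem_univ o) hcon
      · intro a₁ _ ha₁
        refine Finset.sum_eq_zero fun o₁ _ => ?_
        simp [ha₁]
      · intro hcon; exact absurd (Finset.mem_univ a) hcon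
    rw [step3]
    show _ = M.bprSO b a s' o / M.bprO b a o
    rw [← Finset.sum_div]
    rfl

lemma isWeight_sum_one (b₀ tgt : Belief S) (w : M.OSIdx → ℝ)
    (hw : M.IsWeight b₀ tgt w) : ∑ i, w i = 1 := by
  calc ∑ i, w i = ∑ i, ∑ s, w i * (M.member b₀ i).val s := by
        refine Finset.sum_congr rfl fun i _ => ?_
        rw [← Finset.mul_sum, (M.member b₀ i).sum_one, mul_one]
    _ = ∑ s, ∑ i, w i * (M.member b₀ i).val s := Finset.sum_comm
    _ = ∑ s, tgt.val s := Finset.sum_congr rfl fun s _ => hw.2 s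
    _ = 1 := tgt.sum_one

end POMDP

/-- Soundness of the optimized tighter informed bound: if `Q_P` is a bounded convex fixed
point of `H_POMDP` and `Q_O` a bounded fixed point of `H_OTIB`, then `Q_P ≤ Q_O`. -/
theorem QPOMDP_le_QOTIB {S A O : Type*} [Fintype S] [Fintype A] [Fintype O]
    [Nonempty S] [Nonempty A] [Nonempty O] (M : POMDP S A O) (b₀ : Belief S)
    (QP QO : Belief S → A → ℝ)
    (hQPbdd : ∃ C : ℝ, ∀ b a, |QP b a| ≤ C) (hQPconv : ConvexInBelief QP)
    (hQP : ∀ b a, QP b a = M.HPOMDP QP b a)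
    (hQObdd : ∃ C : ℝ, ∀ b a, |QO b a| ≤ C)
    (hQO : ∀ b a, QO b a = M.HOTIB b₀ QO b a)
    (b : Belief S) (a : A) :
    QP b a ≤ QO b a := by
  obtain ⟨CP, hCP⟩ := hQPbdd
  obtain ⟨CO, hCO⟩ := hQObdd
  set K : ℝ := CP + CO with hKdef
  have hK : 0 ≤ K := by
    have h1 := abs_nonneg (QP b a)
    have h2 := abs_nonneg (QO b a)
    have h3 := hCP b a
    have h4 := hCO b a
    simp only [hKdef]; linarith
  have key : ∀ n : ℕ, ∀ (b : Belief S) (a : A), QP b a - QO b a ≤ M.γ ^ n * K := by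
    intro n
    induction n with
    | zero =>
      intro b a
      have h1 := abs_le.1 (hCP b a)
      have h2 := abs_le.1 (hCO b a)
      rw [pow_zero, one_mul, hKdef]
      linarith [h1.2, h2.1]
    | succ n ih =>
      intro b a
      rw [hQP b a, hQO b a]
      unfold POMDP.HPOMDP POMDP.HOTIB
      have hper : ∀ o : O,
          (if h : 0 < M.bprO b a o then
            M.bprO b a o * Finset.univ.sup' Finset.univ_nonempty
              (fun a' => QP (M.post b a o h) a')
          else 0)
          ≤ (if h : 0 < M.bprO b a o then
            Finset.univ.sup' Finset.univ_nonempty (fun a' =>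
              M.bprO b a o * ⨅ w : {w : M.OSIdx → ℝ // M.IsWeight b₀ (M.post b a o h) w},
                ∑ i, (w : M.OSIdx → ℝ) i * QO (M.member b₀ i) a')
          else 0) + M.bprO b a o * (M.γ ^ n * K) := by
        intro o
        by_cases h : 0 < M.bprO b a o
        · rw [dif_pos h, dif_pos h]
          obtain ⟨a', -, ha'⟩ := Finset.exists_mem_eq_sup' Finset.univ_nonempty
            (fun a' => QP (M.post b a o h) a')
          rw [ha']
          have hle : M.bprO b a o * (⨅ w : {w : M.OSIdx → ℝ //
                M.IsWeight b₀ (M.post b a o h) w},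
                ∑ i, (w : M.OSIdx → ℝ) i * QO (M.member b₀ i) a')
              ≤ Finset.univ.sup' Finset.univ_nonempty (fun a' =>
                M.bprO b a o * ⨅ w : {w : M.OSIdx → ℝ //
                  M.IsWeight b₀ (M.post b a o h) w},
                  ∑ i, (w : M.OSIdx → ℝ) i * QO (M.member b₀ i) a') :=
            Finset.le_sup' (fun a' =>
                M.bprO b a o * ⨅ w : {w : M.OSIdx → ℝ //
                  M.IsWeight b₀ (M.post b a o h) w},
                  ∑ i, (w : M.OSIdx → ℝ) i * QO (M.member b₀ i) a')
              (Finset.mem_univ a')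
          have hNE : Nonempty {w : M.OSIdx → ℝ // M.IsWeight b₀ (M.post b a o h) w} := by
            obtain ⟨w, hw⟩ := M.weight_exists b₀ b a o h
            exact ⟨⟨w, hw⟩⟩
          have hinf : QP (M.post b a o h) a' - M.γ ^ n * K ≤
              ⨅ w : {w : M.OSIdx → ℝ // M.IsWeight b₀ (M.post b a o h) w},
                ∑ i, (w : M.OSIdx → ℝ) i * QO (M.member b₀ i) a' := by
            refine le_ciInf fun w => ?_
            obtain ⟨w, hw⟩ := w
            have h1 : ∑ i, w i * (QP (M.member b₀ i) a' - M.γ ^ n * K)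
                ≤ ∑ i, w i * QO (M.member b₀ i) a' := by
              refine Finset.sum_le_sum fun i _ => ?_
              have hihi := ih (M.member b₀ i) a'
              have hwi := hw.1 i
              nlinarith
            have hws : ∑ i, w i = 1 := M.isWeight_sum_one b₀ _ w hw
            have h2 : ∑ i, w i * (QP (M.member b₀ i) a' - M.γ ^ n * K)
                = (∑ i, w i * QP (M.member b₀ i) a') - M.γ ^ n * K := by
              simp only [mul_sub]
              rw [Finset.sum_sub_distrib, ← Finset.sum_mul, hws, one_mul]
            have h3 : QP (M.post b a o h) a' ≤ ∑ i, w i * QP (M.member b₀ i) a' :=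
              jensen hQPconv (M.member b₀) w hw.1 (M.post b a o h) hw.2 a'
            linarith
          have h4 := mul_le_mul_of_nonneg_left hinf h.le
          rw [mul_sub] at h4
          linarith
        · rw [dif_neg h, dif_neg h]
          have := mul_nonneg (M.bprO_nonneg b a o) (mul_nonneg (pow_nonneg M.γ_pos.le n) hK)
          linarith
      have hsum : (∑ o, if h : 0 < M.bprO b a o then
            M.bprO b a o * Finset.univ.sup' Finset.univ_nonempty
              (fun a' => QP (M.post b a o h) a')
          else 0)
          ≤ (∑ o, if h : 0 < M.bprO b a o then
            Finset.univ.sup' Finset.univ_nonempty (fun a' =>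
              M.bprO b a o * ⨅ w : {w : M.OSIdx → ℝ // M.IsWeight b₀ (M.post b a o h) w},
                ∑ i, (w : M.OSIdx → ℝ) i * QO (M.member b₀ i) a')
          else 0) + M.γ ^ n * K := by
        calc (∑ o, if h : 0 < M.bprO b a o then
              M.bprO b a o * Finset.univ.sup' Finset.univ_nonempty
                (fun a' => QP (M.post b a o h) a')
            else 0)
            ≤ ∑ o, ((if h : 0 < M.bprO b a o then
              Finset.univ.sup' Finset.univ_nonempty (fun a' =>
                M.bprO b a o * ⨅ w : {w : M.OSIdx → ℝ //
                  M.IsWeight b₀ (M.post b a o h) w},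
                  ∑ i, (w : M.OSIdx → ℝ) i * QO (M.member b₀ i) a')
            else 0) + M.bprO b a o * (M.γ ^ n * K)) :=
              Finset.sum_le_sum fun o _ => hper o
          _ = (∑ o, if h : 0 < M.bprO b a o then
              Finset.univ.sup' Finset.univ_nonempty (fun a' =>
                M.bprO b a o * ⨅ w : {w : M.OSIdx → ℝ //
                  M.IsWeight b₀ (M.post b a o h) w},
                  ∑ i, (w : M.OSIdx → ℝ) i * QO (M.member b₀ i) a')
            else 0) + (∑ o, M.bprO b a o) * (M.γ ^ n * K) := by
              rw [Finset.sum_add_distrib, ← Finset.sum_mul]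
          _ = _ := by rw [M.sum_bprO b a, one_mul]
      have hfin := mul_le_mul_of_nonneg_left hsum M.γ_pos.le
      rw [mul_add] at hfin
      have hpow : M.γ * (M.γ ^ n * K) = M.γ ^ (n + 1) * K := by
        rw [pow_succ]; ring
      linarith [hpow.le, hpow.ge]
  by_contra hlt
  push_neg at hlt
  have htend : Filter.Tendsto (fun n : ℕ => M.γ ^ n * K) Filter.atTop (nhds 0) := by
    have h := tendsto_pow_atTop_nhds_zero_of_lt_one M.γ_pos.le M.γ_lt_one
    simpa using h.mul_const K
  obtain ⟨n, hn⟩ := (htend.eventually (gt_mem_nhds (sub_pos.2 hlt))).exists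
  have := key n b a
  linarith
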